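/- Let G be a connected multigraph on [n] = {1,…,n} rooted at n, and let e = {n,i} be an edge of G (i ≠ n, μ(n,i) ≥ 1) that is neither a loop nor a bridge, i.e. the multigraph G − e (with multiplicity μ(n,i) decreased by 1) is still connected. Let G∖e be the contraction of e: the multigraph on vertex set [n]∖{i} rooted at n with multiplicities μ'(n,w) = μ(n,w) + μ(i,w) for w ∉ {n,i} and μ'(u,w) = μ(u,w) for u,w ∉ {n,i}. Then Q_G(q) = q · Q_{G−e}(q) + Q_{G∖e}(q). -/

import Mathlib

open scoped Classical

/-- Out-degree of vertex `i` with respect to a vertex subset `I`. -/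
def outdeg {V : Type*} [Fintype V] [DecidableEq V] (μ : V → V → ℕ)
    (I : Finset V) (i : V) : ℕ :=
  ∑ j ∈ Iᶜ, μ i j

/-- An `(H,r)`-parking function of the multigraph `μ` rooted at `r`. -/
def IsParking {V : Type*} [Fintype V] [DecidableEq V] (μ : V → V → ℕ) (r : V)
    (f : V → ℤ) : Prop :=
  f r = -1 ∧ (∀ v, v ≠ r → 0 ≤ f v) ∧
  ∀ I : Finset V, I.Nonempty → r ∉ I → ∃ i ∈ I, f i < (outdeg μ I i : ℤ)

/-- The generating polynomial `Q_{H,r}(q) = Σ_f q^{Σ_{v ≠ r} f(v)}` of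
`(H,r)`-parking functions. -/
noncomputable def Qpoly {V : Type*} [Fintype V] [DecidableEq V] (μ : V → V → ℕ)
    (r : V) : Polynomial ℤ :=
  ∑ᶠ f ∈ {f : V → ℤ | IsParking μ r f},
    (Polynomial.X : Polynomial ℤ) ^ (∑ v ∈ Finset.univ.erase r, f v).toNat

/-- The simple support graph of the multigraph `μ`. -/
def supportGraph {V : Type*} (μ : V → V → ℕ) : SimpleGraph V where
  Adj i j := i ≠ j ∧ 1 ≤ μ i j ∧ 1 ≤ μ j i
  symm := ⟨fun i j h => ⟨h.1.symm, h.2.2, h.2.1⟩⟩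
  loopless := ⟨fun i h => h.1 rfl⟩

/-- The multigraph obtained by deleting one copy of the edge `{a,b}`. -/
def deleteEdge {V : Type*} [DecidableEq V] (μ : V → V → ℕ) (a b : V) : V → V → ℕ :=
  fun u v => μ u v - if (u = a ∧ v = b) ∨ (u = b ∧ v = a) then 1 else 0

/-- The multigraph obtained by contracting the edge `{a,b}` (identifying `b` with
`a`): on vertex set `V \ {b}`, multiplicities `μ'(a,w) = μ(a,w) + μ(b,w)` for
`w ∉ {a,b}` and `μ'(u,w) = μ(u,w)` for `u,w ∉ {a,b}` (loops are irrelevant). -/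
def contractEdge {V : Type*} [DecidableEq V] (μ : V → V → ℕ) (a b : V) :
    {v : V // v ≠ b} → {v : V // v ≠ b} → ℕ :=
  fun u w =>
    if u.val = a ∧ w.val ≠ a then μ a w.val + μ b w.val
    else if w.val = a ∧ u.val ≠ a then μ u.val a + μ u.val b
    else μ u.val w.val

set_option linter.unusedSectionVars false

section Aux
variable {V : Type*} [Fintype V] [DecidableEq V]

lemma parking_finite (μ : V → V → ℕ) (r : V) :
    {f : V → ℤ | IsParking μ r f}.Finite := by
  apply Set.Finite.subset
    (Set.Finite.pi (t := fun v : V => Set.Icc (-1 : ℤ) (outdeg μ {v} v))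
      (fun v => Set.finite_Icc _ _))
  intro f hf
  simp only [Set.mem_pi, Set.mem_univ, forall_true_left, Set.mem_Icc]
  intro v
  by_cases hv : v = r
  · subst hv
    have h0 : (0 : ℤ) ≤ (outdeg μ {v} v : ℤ) := Int.natCast_nonneg _
    rw [hf.1]
    omega
  · obtain ⟨w, hw, hlt⟩ := hf.2.2 {v} ⟨v, Finset.mem_singleton_self v⟩
      (by simp [Ne.symm hv])
    rw [Finset.mem_singleton] at hw; subst hw
    exact ⟨le_trans (by norm_num) (hf.2.1 w hv), le_of_lt hlt⟩

lemma Qpoly_eq_sum (μ : V → V → ℕ) (r : V) :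
    Qpoly μ r = ∑ f ∈ (parking_finite μ r).toFinset,
      (Polynomial.X : Polynomial ℤ) ^ (∑ v ∈ Finset.univ.erase r, f v).toNat := by
  classical
  have hfin : ({f : V → ℤ | IsParking μ r f} ∩ Function.support
      (fun f : V → ℤ => (Polynomial.X : Polynomial ℤ)
        ^ (∑ v ∈ Finset.univ.erase r, f v).toNat)).Finite :=
    (parking_finite μ r).inter_of_left _
  rw [Qpoly, finsum_mem_eq_sum _ hfin]
  apply Finset.sum_subset
  · intro x hx
    rw [Set.Finite.mem_toFinset] at hx ⊢
    exact hx.1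
  · intro x hx hnx
    rw [Set.Finite.mem_toFinset] at hx hnx
    have : x ∉ Function.support (fun f : V → ℤ => (Polynomial.X : Polynomial ℤ)
        ^ (∑ v ∈ Finset.univ.erase r, f v).toNat) := fun h => hnx ⟨hx, h⟩
    exact Function.notMem_support.mp this

lemma parking_sum_nonneg (μ : V → V → ℕ) (r : V) (f : V → ℤ)
    (hf : IsParking μ r f) : 0 ≤ ∑ v ∈ Finset.univ.erase r, f v :=
  Finset.sum_nonneg fun v hv => hf.2.1 v (Finset.mem_erase.mp hv).1

lemma outdeg_delete (μ : V → V → ℕ) (hsym : ∀ a b, μ a b = μ b a)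
    (r i : V) (hri : r ≠ i) (hedge : 1 ≤ μ r i)
    (I : Finset V) (hrI : r ∉ I) (v : V) (hv : v ≠ r) :
    (outdeg (deleteEdge μ r i) I v : ℤ)
      = (outdeg μ I v : ℤ) - (if v = i then 1 else 0) := by
  have hrc : r ∈ Iᶜ := Finset.mem_compl.mpr hrI
  unfold outdeg
  rw [← Finset.add_sum_erase _ (deleteEdge μ r i v) hrc,
    ← Finset.add_sum_erase _ (fun j => μ v j) hrc]
  have h1 : ∀ j ∈ Iᶜ.erase r, deleteEdge μ r i v j = μ v j := by
    intro j hj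
    have hjr : j ≠ r := (Finset.mem_erase.mp hj).1
    simp [deleteEdge, hv, hjr]
  rw [Finset.sum_congr rfl h1]
  have h2 : deleteEdge μ r i v r = μ v r - (if v = i then 1 else 0) := by
    simp [deleteEdge, hv]
  rw [h2]
  by_cases hvi : v = i
  · subst hvi
    have h3 : 1 ≤ μ v r := by rw [hsym]; exact hedge
    simp only [if_true]
    push_cast [Nat.cast_sub h3]
    omega
  · simp [hvi]

lemma parking_delete_mp (μ : V → V → ℕ) (hsym : ∀ a b, μ a b = μ b a)
    (r i : V) (hri : r ≠ i) (hedge : 1 ≤ μ r i) (g : V → ℤ)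
    (hg : IsParking (deleteEdge μ r i) r g) :
    IsParking μ r (fun v => g v + if v = i then 1 else 0) := by
  obtain ⟨h1, h2, h3⟩ := hg
  refine ⟨?_, ?_, ?_⟩
  · simp only [if_neg hri]; omega
  · intro v hv
    have := h2 v hv
    dsimp only
    split_ifs <;> omega
  · intro I hI hrI
    obtain ⟨v, hvI, hlt⟩ := h3 I hI hrI
    refine ⟨v, hvI, ?_⟩
    have hv : v ≠ r := fun h => hrI (h ▸ hvI)
    have hd := outdeg_delete μ hsym r i hri hedge I hrI v hv
    dsimp only
    split_ifs at hd ⊢ <;> omega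

lemma parking_delete_mpr (μ : V → V → ℕ) (hsym : ∀ a b, μ a b = μ b a)
    (r i : V) (hri : r ≠ i) (hedge : 1 ≤ μ r i) (f : V → ℤ)
    (hf : IsParking μ r f) (hfi : f i ≠ 0) :
    IsParking (deleteEdge μ r i) r (fun v => f v - if v = i then 1 else 0) := by
  obtain ⟨h1, h2, h3⟩ := hf
  have hfi1 : 1 ≤ f i := by have := h2 i (Ne.symm hri); omega
  refine ⟨?_, ?_, ?_⟩
  · simp only [if_neg hri]; omega
  · intro v hv
    have := h2 v hv
    dsimp only
    split_ifs with h
    · subst h; omega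
    · omega
  · intro I hI hrI
    obtain ⟨v, hvI, hlt⟩ := h3 I hI hrI
    refine ⟨v, hvI, ?_⟩
    have hv : v ≠ r := fun h => hrI (h ▸ hvI)
    have hd := outdeg_delete μ hsym r i hri hedge I hrI v hv
    dsimp only
    split_ifs at hd ⊢ <;> omega

lemma image_compl_erase (i : V) (I' : Finset {v : V // v ≠ i})
    (r' : {v : V // v ≠ i}) :
    (I'ᶜ.erase r').image Subtype.val
      = (((I'.image Subtype.val)ᶜ).erase i).erase r'.val := by
  ext j
  simp only [Finset.mem_image, Finset.mem_erase, Finset.mem_compl]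
  constructor
  · rintro ⟨w, ⟨hwr, hw⟩, rfl⟩
    refine ⟨fun h => hwr (Subtype.ext h), w.2, ?_⟩
    rintro ⟨u, hu, hval⟩
    exact hw (by rwa [← Subtype.ext hval.symm] at hu)
  · rintro ⟨hjr, hji, hj⟩
    exact ⟨⟨j, hji⟩, ⟨fun h => hjr (congrArg Subtype.val h),
      fun h => hj ⟨⟨j, hji⟩, h, rfl⟩⟩, rfl⟩

lemma mem_image_val_iff (i : V) (I' : Finset {v : V // v ≠ i}) (w : {v : V // v ≠ i}) :
    w.val ∈ I'.image Subtype.val ↔ w ∈ I' := by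
  simp only [Finset.mem_image]
  exact ⟨fun ⟨u, hu, h⟩ => (Subtype.ext h : u = w) ▸ hu, fun h => ⟨w, h, rfl⟩⟩

lemma outdeg_contract (μ : V → V → ℕ) (r i : V) (hri : r ≠ i)
    (I' : Finset {v : V // v ≠ i})
    (hrI : (⟨r, hri⟩ : {v : V // v ≠ i}) ∉ I')
    (v : {v : V // v ≠ i}) (hv : v.val ≠ r) :
    outdeg (contractEdge μ r i) I' v = outdeg μ (I'.image Subtype.val) v.val := by
  set r' : {v : V // v ≠ i} := ⟨r, hri⟩ with hr'
  set J : Finset V := I'.image Subtype.val with hJ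
  have hrc' : r' ∈ I'ᶜ := Finset.mem_compl.mpr hrI
  have hiJ : i ∈ Jᶜ := by
    rw [Finset.mem_compl]
    rintro hmem
    rw [hJ, Finset.mem_image] at hmem
    obtain ⟨u, _, h⟩ := hmem
    exact u.2 h
  have hrJ : r ∈ Jᶜ.erase i := by
    rw [Finset.mem_erase, Finset.mem_compl]
    refine ⟨Ne.symm (Ne.symm hri), ?_⟩
    rintro hmem
    rw [hJ, Finset.mem_image] at hmem
    obtain ⟨u, hu, h⟩ := hmem
    exact hrI ((Subtype.ext h : u = r') ▸ hu)
  unfold outdeg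
  rw [← Finset.add_sum_erase _ (contractEdge μ r i v) hrc',
    ← Finset.add_sum_erase _ (fun j => μ v.val j) hiJ,
    ← Finset.add_sum_erase _ (fun j => μ v.val j) hrJ]
  have h1 : contractEdge μ r i v r' = μ v.val r + μ v.val i := by
    simp [contractEdge, hv, hr']
  have h2 : ∀ w ∈ I'ᶜ.erase r', contractEdge μ r i v w = μ v.val w.val := by
    intro w hw
    have hwr : w.val ≠ r := fun h => (Finset.mem_erase.mp hw).1 (Subtype.ext h)
    simp [contractEdge, hv, hwr]
  rw [Finset.sum_congr rfl h2]
  have h3 : ∑ w ∈ I'ᶜ.erase r', μ v.val w.val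
      = ∑ j ∈ (Jᶜ.erase i).erase r, μ v.val j := by
    have := image_compl_erase i I' r'
    rw [hJ]
    rw [← this]
    rw [Finset.sum_image (fun x _ y _ h => Subtype.ext h)]
  rw [h1, h3]
  ring

lemma parking_contract_mp (μ : V → V → ℕ) (r i : V) (hri : r ≠ i)
    (f : V → ℤ) (hf : IsParking μ r f) (hfi : f i = 0) :
    IsParking (contractEdge μ r i) (⟨r, hri⟩ : {v : V // v ≠ i})
      (fun w => f w.val) := by
  obtain ⟨h1, h2, h3⟩ := hf
  refine ⟨h1, ?_, ?_⟩
  · intro w hw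
    exact h2 w.val (fun h => hw (Subtype.ext h))
  · intro I' hI' hrI'
    set J : Finset V := I'.image Subtype.val with hJ
    have hJne : J.Nonempty := hI'.image _
    have hrJ : r ∉ J := by
      intro hmem
      rw [hJ, Finset.mem_image] at hmem
      obtain ⟨u, hu, h⟩ := hmem
      exact hrI' ((Subtype.ext h : u = ⟨r, hri⟩) ▸ hu)
    obtain ⟨v, hvJ, hlt⟩ := h3 J hJne hrJ
    have hvi : v ≠ i := by
      intro h; subst h
      rw [hJ, Finset.mem_image] at hvJ
      obtain ⟨u, _, h⟩ := hvJ
      exact u.2 h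
    refine ⟨⟨v, hvi⟩, (mem_image_val_iff i I' ⟨v, hvi⟩).mp hvJ, ?_⟩
    have hvr : v ≠ r := fun h => hrJ (h ▸ hvJ)
    rw [outdeg_contract μ r i hri I' hrI' ⟨v, hvi⟩ hvr]
    exact hlt

lemma parking_contract_mpr (μ : V → V → ℕ) (hsym : ∀ a b, μ a b = μ b a)
    (r i : V) (hri : r ≠ i) (hedge : 1 ≤ μ r i)
    (g : {v : V // v ≠ i} → ℤ)
    (hg : IsParking (contractEdge μ r i) (⟨r, hri⟩ : {v : V // v ≠ i}) g) :
    IsParking μ r (fun v => if h : v = i then 0 else g ⟨v, h⟩) := by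
  obtain ⟨h1, h2, h3⟩ := hg
  refine ⟨?_, ?_, ?_⟩
  · simp only [dif_neg hri]; exact h1
  · intro v hv
    dsimp only
    split_ifs with h
    · exact le_refl 0
    · exact h2 ⟨v, h⟩ (fun he => hv (congrArg Subtype.val he))
  · intro I hI hrI
    by_cases hiI : i ∈ I
    · refine ⟨i, hiI, ?_⟩
      simp only [dif_pos rfl]
      have hrc : r ∈ Iᶜ := Finset.mem_compl.mpr hrI
      have hle : μ i r ≤ outdeg μ I i :=
        Finset.single_le_sum (f := fun j => μ i j) (fun j _ => Nat.zero_le _) hrc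
      have h4 : 1 ≤ μ i r := by rw [hsym]; exact hedge
      have h5 : 1 ≤ outdeg μ I i := le_trans h4 hle
      exact_mod_cast Int.lt_of_lt_of_le Int.zero_lt_one (by exact_mod_cast h5)
    · set I' : Finset {v : V // v ≠ i} := I.subtype (· ≠ i) with hI'def
      have hJ : I'.image Subtype.val = I := by
        ext j
        simp only [hI'def, Finset.mem_image, Finset.mem_subtype]
        constructor
        · rintro ⟨w, hw, rfl⟩; exact hw
        · intro hj; exact ⟨⟨j, fun h => hiI (h ▸ hj)⟩, hj, rfl⟩
      have hI'ne : I'.Nonempty := by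
        obtain ⟨x, hx⟩ := hI
        exact ⟨⟨x, fun h => hiI (h ▸ hx)⟩, by simp [hI'def, hx]⟩
      have hrI' : (⟨r, hri⟩ : {v : V // v ≠ i}) ∉ I' := by
        simp [hI'def, hrI]
      obtain ⟨w, hwI', hlt⟩ := h3 I' hI'ne hrI'
      have hwI : w.val ∈ I := by rw [← hJ]; exact (mem_image_val_iff i I' w).mpr hwI'
      refine ⟨w.val, hwI, ?_⟩
      have hwr : w.val ≠ r := fun h => hrI (h ▸ hwI)
      rw [outdeg_contract μ r i hri I' hrI' w hwr, hJ] at hlt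
      dsimp only
      rw [dif_neg w.2]
      exact hlt

lemma sum_erase_subtype (r i : V) (hri : r ≠ i) (f : V → ℤ) (hfi : f i = 0) :
    ∑ v ∈ Finset.univ.erase r, f v
      = ∑ w ∈ (Finset.univ.erase (⟨r, hri⟩ : {v : V // v ≠ i})), f w.val := by
  have himg : (Finset.univ.erase (⟨r, hri⟩ : {v : V // v ≠ i})).image Subtype.val
      = (Finset.univ.erase i).erase r := by
    have := image_compl_erase i (∅ : Finset {v : V // v ≠ i}) ⟨r, hri⟩
    simpa using this
  have hrhs : ∑ w ∈ (Finset.univ.erase (⟨r, hri⟩ : {v : V // v ≠ i})), f w.val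
      = ∑ j ∈ (Finset.univ.erase i).erase r, f j := by
    rw [← himg, Finset.sum_image (fun x _ y _ h => Subtype.ext h)]
  rw [hrhs]
  have hii : i ∈ Finset.univ.erase r :=
    Finset.mem_erase.mpr ⟨Ne.symm hri, Finset.mem_univ i⟩
  rw [← Finset.add_sum_erase _ f hii, hfi, zero_add, Finset.erase_right_comm]

end Aux

/-- Deletion–contraction for an edge `e = {n,i}` incident to the root `n` which is
neither a loop nor a bridge: `Q_G(q) = q ⬝ Q_{G-e}(q) + Q_{G∖e}(q)`. -/
theorem parking_deletion_contraction_root {n : ℕ}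
    (μ : Fin (n + 1) → Fin (n + 1) → ℕ) (hsym : ∀ i j, μ i j = μ j i)
    (hconn : (supportGraph μ).Connected)
    (i : Fin (n + 1)) (hi : i ≠ Fin.last n) (hedge : 1 ≤ μ (Fin.last n) i)
    (hconn' : (supportGraph (deleteEdge μ (Fin.last n) i)).Connected) :
    Qpoly μ (Fin.last n) =
      Polynomial.X * Qpoly (deleteEdge μ (Fin.last n) i) (Fin.last n) +
        Qpoly (contractEdge μ (Fin.last n) i) ⟨Fin.last n, hi.symm⟩ := by
  have hri : Fin.last n ≠ i := Ne.symm hi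
  set r : Fin (n + 1) := Fin.last n with hrdef
  rw [Qpoly_eq_sum μ r, Qpoly_eq_sum (deleteEdge μ r i) r,
    Qpoly_eq_sum (contractEdge μ r i) ⟨r, hi.symm⟩,
    ← Finset.sum_filter_add_sum_filter_not (parking_finite μ r).toFinset
      (fun f => f i ≠ 0)]
  congr 1
  · -- deletion part
    rw [Finset.mul_sum]
    refine Finset.sum_nbij' (fun f => fun v => f v - if v = i then 1 else 0)
      (fun g => fun v => g v + if v = i then 1 else 0) ?_ ?_ ?_ ?_ ?_
    · intro f hf
      rw [Finset.mem_filter, Set.Finite.mem_toFinset] at hf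
      rw [Set.Finite.mem_toFinset]
      exact parking_delete_mpr μ hsym r i hri hedge f hf.1 hf.2
    · intro g hg
      rw [Set.Finite.mem_toFinset] at hg
      rw [Finset.mem_filter, Set.Finite.mem_toFinset]
      have hgi : 0 ≤ g i := hg.2.1 i (Ne.symm hri)
      refine ⟨parking_delete_mp μ hsym r i hri hedge g hg, fun hcon => ?_⟩
      simp at hcon
      omega
    · intro f _
      funext v
      dsimp only
      ring
    · intro g _
      funext v
      dsimp only
      ring
    · intro f hf
      rw [Finset.mem_filter, Set.Finite.mem_toFinset] at hf
      have hsub : ∑ v ∈ Finset.univ.erase r, (f v - if v = i then 1 else 0)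
          = (∑ v ∈ Finset.univ.erase r, f v) - 1 := by
        rw [Finset.sum_sub_distrib]
        congr 1
        rw [Finset.sum_ite_eq' (Finset.univ.erase r) i (fun _ => (1 : ℤ))]
        simp [Ne.symm hri]
      have hnn : 0 ≤ ∑ v ∈ Finset.univ.erase r, (f v - if v = i then 1 else 0) :=
        parking_sum_nonneg (deleteEdge μ r i) r _
          (parking_delete_mpr μ hsym r i hri hedge f hf.1 hf.2)
      rw [hsub] at hnn ⊢
      have hexp : (∑ v ∈ Finset.univ.erase r, f v).toNat
          = ((∑ v ∈ Finset.univ.erase r, f v) - 1).toNat + 1 := by omega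
      rw [hexp, pow_succ, mul_comm]
  · -- contraction part
    refine Finset.sum_nbij' (fun f => fun w => f w.val)
      (fun g => fun v => if h : v = i then 0 else g ⟨v, h⟩) ?_ ?_ ?_ ?_ ?_
    · intro f hf
      rw [Finset.mem_filter, Set.Finite.mem_toFinset] at hf
      rw [Set.Finite.mem_toFinset]
      have hfi : f i = 0 := by simpa using hf.2
      exact parking_contract_mp μ r i hri f hf.1 hfi
    · intro g hg
      rw [Set.Finite.mem_toFinset] at hg
      rw [Finset.mem_filter, Set.Finite.mem_toFinset]
      refine ⟨parking_contract_mpr μ hsym r i hri hedge g hg, ?_⟩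
      simp
    · intro f hf
      rw [Finset.mem_filter, Set.Finite.mem_toFinset] at hf
      have hfi : f i = 0 := by simpa using hf.2
      funext v
      dsimp only
      split_ifs with h
      · rw [h, hfi]
      · rfl
    · intro g _
      funext w
      dsimp only
      rw [dif_neg w.2]
    · intro f hf
      rw [Finset.mem_filter, Set.Finite.mem_toFinset] at hf
      have hfi : f i = 0 := by simpa using hf.2
      rw [sum_erase_subtype r i hri f hfi]
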